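/- Let D = diag(d₁, …, dₙ) be a real diagonal matrix with all dᵢ > 0, let J₀ be an n×n complex matrix, and suppose there exists an invertible matrix P such that both P⁻¹DP and P⁻¹J₀P are upper triangular. Suppose for some index k, the diagonal entry μₖ = (P⁻¹J₀P)ₖₖ satisfies Re μₖ > 0, and let λ be a real number with λ > (maxᵢ dᵢ) / Re μₖ. Then the matrix −D + λJ₀ has an eigenvalue with strictly positive real part. -/
import Mathlib

open Matrix

/-- If `P⁻¹ M P` is upper triangular, its diagonal entries belong to the spectrum of `M`. -/
lemma diag_mem_spectrum_aux {n : ℕ} (M P : Matrix (Fin n) (Fin n) ℂ) (hP : IsUnit P)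
    (hT : (P⁻¹ * M * P).BlockTriangular (id : Fin n → Fin n)) (k : Fin n) :
    (P⁻¹ * M * P) k k ∈ spectrum ℂ M := by
  set ν := (P⁻¹ * M * P) k k with hν
  rw [spectrum.mem_iff]
  intro hU
  have hA : IsUnit (P⁻¹ * (algebraMap ℂ (Matrix (Fin n) (Fin n) ℂ) ν - M) * P) := by
    exact ((Matrix.isUnit_nonsing_inv_iff.mpr hP).mul hU).mul hP
  have hconj : P⁻¹ * (algebraMap ℂ (Matrix (Fin n) (Fin n) ℂ) ν - M) * P
      = Matrix.diagonal (fun _ => ν) - P⁻¹ * M * P := by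
    have : (algebraMap ℂ (Matrix (Fin n) (Fin n) ℂ) ν) = Matrix.diagonal (fun _ => ν) := by
      ext i j
      simp [Matrix.algebraMap_matrix_apply, Matrix.diagonal, Matrix.one_apply]
    have hscal : Matrix.diagonal (fun _ : Fin n => ν) = ν • (1 : Matrix (Fin n) (Fin n) ℂ) := by
      rw [smul_eq_diagonal_mul, Matrix.mul_one]
    rw [this, Matrix.mul_sub, Matrix.sub_mul, hscal, Matrix.mul_smul, Matrix.smul_mul,
      Matrix.mul_one, Matrix.nonsing_inv_mul P (Matrix.isUnit_iff_isUnit_det P |>.mp hP)]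
  rw [hconj] at hA
  have htri : (Matrix.diagonal (fun _ => ν) - P⁻¹ * M * P).BlockTriangular (id : Fin n → Fin n) :=
    (Matrix.blockTriangular_diagonal _).sub hT
  have hdet := Matrix.det_of_upperTriangular htri
  have : (Matrix.diagonal (fun _ => ν) - P⁻¹ * M * P).det = 0 := by
    rw [hdet]
    apply Finset.prod_eq_zero (Finset.mem_univ k)
    simp [hν]
  exact (Matrix.isUnit_iff_isUnit_det _ |>.mp hA).ne_zero this

theorem stmt_5 (n : ℕ) (d : Fin n → ℝ) (hd : ∀ i, 0 < d i)
    (J₀ P : Matrix (Fin n) (Fin n) ℂ) (hP : IsUnit P)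
    (hD : ((P⁻¹ * Matrix.diagonal (fun i => (d i : ℂ)) * P)).BlockTriangular
      (id : Fin n → Fin n))
    (hJ : (P⁻¹ * J₀ * P).BlockTriangular (id : Fin n → Fin n))
    (k : Fin n) (hk : 0 < ((P⁻¹ * J₀ * P) k k).re)
    (lam : ℝ) (hlam : (⨆ i, d i) / ((P⁻¹ * J₀ * P) k k).re < lam) :
    ∃ ν ∈ spectrum ℂ (-(Matrix.diagonal fun i => (d i : ℂ)) + (lam : ℂ) • J₀),
      0 < ν.re := by
  have hne : Nonempty (Fin n) := ⟨k⟩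
  set Dc : Matrix (Fin n) (Fin n) ℂ := Matrix.diagonal (fun i => (d i : ℂ)) with hDc
  set M : Matrix (Fin n) (Fin n) ℂ := -Dc + (lam : ℂ) • J₀ with hM
  -- conjugated matrix
  have hconj : P⁻¹ * M * P = -(P⁻¹ * Dc * P) + (lam : ℂ) • (P⁻¹ * J₀ * P) := by
    rw [hM]
    rw [Matrix.mul_add, Matrix.add_mul, Matrix.mul_neg, Matrix.neg_mul,
      Matrix.mul_smul, Matrix.smul_mul]
  have htri : (P⁻¹ * M * P).BlockTriangular (id : Fin n → Fin n) := by
    rw [hconj]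
    exact hD.neg.add (fun i j h => by simp [hJ h])
  have hmem := diag_mem_spectrum_aux M P hP htri k
  refine ⟨(P⁻¹ * M * P) k k, hmem, ?_⟩
  -- the D diagonal entry is some d i
  have hDmem := diag_mem_spectrum_aux Dc P hP hD k
  rw [hDc, spectrum_diagonal] at hDmem
  obtain ⟨i, hi⟩ := hDmem
  have hval : (P⁻¹ * M * P) k k
      = -((P⁻¹ * Dc * P) k k) + (lam : ℂ) * (P⁻¹ * J₀ * P) k k := by
    rw [hconj]; simp
  rw [hval, ← hi]
  simp only [Complex.add_re, Complex.neg_re, Complex.ofReal_re, Complex.mul_re,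
    Complex.ofReal_im]
  have hlam' : (⨆ i, d i) < lam * ((P⁻¹ * J₀ * P) k k).re :=
    (div_lt_iff₀ hk).mp hlam
  have hle : d i ≤ ⨆ i, d i := le_ciSup (Set.Finite.bddAbove (Set.finite_range d)) i
  nlinarith [hle, hlam']
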